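/- Main-factorization identity for the β-coefficients at λ = 2N + 1 − k − (n−1)/2 (used in the proof of Theorem 5.8/MainFactOdd1): for every natural number n ≥ 2, all natural numbers N ≥ 1 and k with 1 ≤ k ≤ N, and every i with 0 ≤ i ≤ N: if i > N−k then β_i^{(N)}(2N + 1 − k − (n−1)/2) = 0, and if i ≤ N−k then β_i^{(N)}(2N + 1 − k − (n−1)/2) = β_i^{(N−k)}(2N + 1 − k − (n−1)/2). -/

import Mathlib

open Finset Polynomial

noncomputable def aC (n N j : ℕ) (l : ℂ) : ℂ :=
  (-2 : ℂ) ^ (N - j) *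
    ((N.factorial : ℂ) / ((j.factorial : ℂ) * ((2 * N - 2 * j).factorial : ℂ))) *
    ∏ k ∈ Finset.Ico j N, (2 * l - 4 * (N : ℂ) + 2 * (k : ℂ) + (n : ℂ) + 1)

noncomputable def bC (n N j : ℕ) (l : ℂ) : ℂ :=
  (-2 : ℂ) ^ (N - j) *
    ((N.factorial : ℂ) / ((j.factorial : ℂ) * ((2 * N - 2 * j + 1).factorial : ℂ))) *
    ∏ k ∈ Finset.Ico j N, (2 * l - 4 * (N : ℂ) + 2 * (k : ℂ) + (n : ℂ) - 1)

noncomputable def bCZ (n M : ℕ) (j : ℤ) (l : ℂ) : ℂ :=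
  if 0 ≤ j ∧ j ≤ (M : ℤ) then bC n M j.toNat l else 0

noncomputable def alphaC (n N i : ℕ) (l : ℂ) : ℂ :=
  (-1 : ℂ) ^ i * 2 ^ N * ((N.factorial : ℂ) / ((2 * N).factorial : ℂ)) * (N.choose i : ℂ) *
    (∏ k ∈ Finset.Icc (i + 1) N, (2 * l + (n : ℂ) - 2 * (k : ℂ))) *
    ∏ k ∈ Finset.Icc 1 i, (2 * l + (n : ℂ) - 2 * (k : ℂ) - 2 * (N : ℂ) + 1)

noncomputable def betaC (n N i : ℕ) (l : ℂ) : ℂ :=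
  (-1 : ℂ) ^ i * 2 ^ N * ((N.factorial : ℂ) / ((2 * N + 1).factorial : ℂ)) * (N.choose i : ℂ) *
    (∏ k ∈ Finset.Icc (i + 1) N, (2 * l + (n : ℂ) - 2 * (k : ℂ))) *
    ∏ k ∈ Finset.Icc 1 i, (2 * l + (n : ℂ) - 2 * (k : ℂ) - 2 * (N : ℂ) - 1)

noncomputable def gammaC (n N i : ℕ) (l p : ℂ) : ℂ :=
  (-1 : ℂ) ^ i * 2 ^ N *
    ((N.factorial : ℂ) / (((N : ℂ) + 1) * ((2 * N + 1).factorial : ℂ))) *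
    ((N + 1).choose i : ℂ) *
    ((l + p - 2 * (N : ℂ) - 1) * ((N : ℂ) + 1) * (2 * l + (n : ℂ) - 2 * (i : ℂ)) +
      (l + (n : ℂ) - p) * (2 * (N : ℂ) + 1) * ((N : ℂ) - (i : ℂ) + 1)) *
    (∏ k ∈ Finset.Icc (i + 1) N, (2 * l + (n : ℂ) - 2 * (k : ℂ))) *
    ∏ k ∈ Finset.Icc 1 (i - 1), (2 * l + (n : ℂ) - 2 * (k : ℂ) - 2 * (N : ℂ) - 1)

noncomputable def poch (a : ℂ) (l : ℕ) : ℂ :=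
  ∏ m ∈ Finset.range l, (a + (m : ℂ))

lemma oddprod (M : ℕ) : ∀ L : ℕ,
    (∏ m ∈ Finset.range L, (2*(M:ℂ)+3+2*(m:ℂ))) * ((2*M+1).factorial : ℂ) * 2^L
      * ((M+L).factorial : ℂ) = ((2*(M+L)+1).factorial : ℂ) * (M.factorial : ℂ) := by
  intro L
  induction L with
  | zero => simp
  | succ L ih =>
    rw [Finset.prod_range_succ]
    have h1 : M + (L+1) = (M+L)+1 := rfl
    have h2 : 2*(M+L+1)+1 = (2*(M+L)+1) + 1 + 1 := by omega
    rw [h1, h2, Nat.factorial_succ (2*(M+L)+1+1), Nat.factorial_succ (2*(M+L)+1), Nat.factorial_succ (M+L)]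
    push_cast
    push_cast at ih
    linear_combination (2*(M:ℂ)+3+2*(L:ℂ))*2*((M:ℂ)+(L:ℂ)+1) * ih

lemma descprod (M : ℕ) : ∀ i : ℕ, i ≤ M →
    (∏ j ∈ Finset.Icc 1 i, ((M:ℂ)+1-(j:ℂ))) * ((M-i).factorial : ℂ) = (M.factorial : ℂ) := by
  intro i
  induction i with
  | zero => simp
  | succ i ih =>
    intro h
    rw [Finset.prod_Icc_succ_top (by omega)]
    have h1 : M - i = (M - (i+1)) + 1 := by omega
    have h2 : ((M - (i+1) : ℕ) : ℂ) = (M:ℂ) - (i:ℂ) - 1 := by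
      push_cast [Nat.cast_sub (by omega : i+1 ≤ M)]; ring
    have := ih (by omega)
    rw [h1, Nat.factorial_succ] at this
    push_cast [h2] at this ⊢
    linear_combination this

lemma reindexP1 (N M i : ℕ) (hi : i ≤ N) :
    ∏ j ∈ Finset.Icc (i+1) N, (2*(N:ℂ)+2*(M:ℂ)+3-2*(j:ℂ))
      = ∏ m ∈ Finset.range (N-i), (2*(M:ℂ)+3+2*(m:ℂ)) := by
  rw [← Finset.Ico_add_one_right_eq_Icc, Finset.prod_Ico_eq_prod_range]
  have hL : N+1-(i+1) = N-i := by omega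
  rw [hL, ← Finset.prod_range_reflect]
  refine Finset.prod_congr rfl fun m hm => ?_
  simp only [Finset.mem_range] at hm
  have h1 : i+1+(N-i-1-m) = N - m := by omega
  rw [h1, Nat.cast_sub (by omega : m ≤ N)]
  ring

lemma evenprod (M i : ℕ) (h : i ≤ M) :
    (∏ j ∈ Finset.Icc 1 i, (2*(M:ℂ)+2-2*(j:ℂ))) * ((M-i).factorial : ℂ)
      = 2^i * (M.factorial : ℂ) := by
  have e : ∏ j ∈ Finset.Icc 1 i, (2*(M:ℂ)+2-2*(j:ℂ))
      = 2^i * ∏ j ∈ Finset.Icc 1 i, ((M:ℂ)+1-(j:ℂ)) := by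
    have hb : ∀ j ∈ Finset.Icc 1 i, (2*(M:ℂ)+2-2*(j:ℂ)) = 2*((M:ℂ)+1-(j:ℂ)) :=
      fun j _ => by ring
    rw [Finset.prod_congr rfl hb, Finset.prod_mul_distrib, Finset.prod_const, Nat.card_Icc]
    simp
  rw [e, mul_assoc, descprod M i h]

set_option maxHeartbeats 2000000 in
lemma betaClosed (n N M i : ℕ) (l : ℂ) (hiN : i ≤ N) (hiM : i ≤ M)
    (hl : 2*l + (n:ℂ) = 2*(N:ℂ)+2*(M:ℂ)+3) :
    betaC n N i l = (-1:ℂ)^i * 4^i * (N.factorial:ℂ) * (N.factorial:ℂ) * (M.factorial:ℂ)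
        * (M.factorial:ℂ) * ((2*(M+(N-i))+1).factorial:ℂ) /
      (((2*N+1).factorial:ℂ) * ((2*M+1).factorial:ℂ) * (i.factorial:ℂ) * ((N-i).factorial:ℂ)
        * ((M-i).factorial:ℂ) * ((M+(N-i)).factorial:ℂ)) := by
  unfold betaC
  have e1 : ∏ k ∈ Finset.Icc (i+1) N, (2*l+(n:ℂ)-2*(k:ℂ))
      = ∏ m ∈ Finset.range (N-i), (2*(M:ℂ)+3+2*(m:ℂ)) := by
    rw [← reindexP1 N M i hiN]
    exact Finset.prod_congr rfl fun j _ => by linear_combination hl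
  have e2 : ∏ k ∈ Finset.Icc 1 i, (2*l+(n:ℂ)-2*(k:ℂ)-2*(N:ℂ)-1)
      = ∏ j ∈ Finset.Icc 1 i, (2*(M:ℂ)+2-2*(j:ℂ)) :=
    Finset.prod_congr rfl fun j _ => by linear_combination hl
  have f0 : ∀ m : ℕ, ((m.factorial : ℂ)) ≠ 0 := fun m => Nat.cast_ne_zero.mpr m.factorial_ne_zero
  have p0 : (2:ℂ)^(N-i) ≠ 0 := pow_ne_zero _ two_ne_zero
  have pi0 : (2:ℂ)^i ≠ 0 := pow_ne_zero _ two_ne_zero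
  have e3 : ∏ m ∈ Finset.range (N-i), (2*(M:ℂ)+3+2*(m:ℂ))
      = ((2*(M+(N-i))+1).factorial:ℂ) * (M.factorial:ℂ)
        / (((2*M+1).factorial:ℂ) * 2^(N-i) * ((M+(N-i)).factorial:ℂ)) := by
    rw [eq_div_iff (mul_ne_zero (mul_ne_zero (f0 _) p0) (f0 _))]
    linear_combination oddprod M (N-i)
  have e4 : ∏ j ∈ Finset.Icc 1 i, (2*(M:ℂ)+2-2*(j:ℂ))
      = 2^i * (M.factorial:ℂ) / ((M-i).factorial:ℂ) := by
    rw [eq_div_iff (f0 _)]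
    exact evenprod M i hiM
  rw [e1, e2, e3, e4, Nat.cast_choose ℂ hiN]
  have hpow : (2:ℂ)^N = 2^(N-i) * 2^i := by
    rw [← pow_add]; congr 1; omega
  have h4 : (4:ℂ)^i = 2^i * 2^i := by
    rw [← mul_pow]; norm_num
  rw [hpow, h4]
  have hc : ((1:ℂ)/2)^(N-i) * (2:ℂ)^(N-i) = 1 := by rw [← mul_pow]; norm_num
  field_simp

theorem beta_main_factorization_second (n : ℕ) (hn : 2 ≤ n) (N k : ℕ) (hN : 1 ≤ N)
    (hk1 : 1 ≤ k) (hkN : k ≤ N) (i : ℕ) (hi : i ≤ N) :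
    (N - k < i → betaC n N i (2 * (N : ℂ) + 1 - (k : ℂ) - ((n : ℂ) - 1) / 2) = 0) ∧
    (i ≤ N - k → betaC n N i (2 * (N : ℂ) + 1 - (k : ℂ) - ((n : ℂ) - 1) / 2)
        = betaC n (N - k) i (2 * (N : ℂ) + 1 - (k : ℂ) - ((n : ℂ) - 1) / 2)) := by
  set l : ℂ := 2 * (N : ℂ) + 1 - (k : ℂ) - ((n : ℂ) - 1) / 2 with hldef
  have hM : ((N - k : ℕ) : ℂ) = (N : ℂ) - (k : ℂ) := Nat.cast_sub hkN
  constructor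
  · intro hlt
    have hmem : N - k + 1 ∈ Finset.Icc 1 i := Finset.mem_Icc.mpr ⟨by omega, by omega⟩
    have hz : (2*l + (n:ℂ) - 2*((N-k+1 : ℕ):ℂ) - 2*(N:ℂ) - 1) = 0 := by
      push_cast [hM]
      ring
    unfold betaC
    rw [Finset.prod_eq_zero hmem hz, mul_zero]
  · intro hle
    have h1 : betaC n N i l = _ := betaClosed n N (N-k) i l hi hle
      (by rw [hldef, hM]; ring)
    have h2 : betaC n (N-k) i l = _ := betaClosed n (N-k) N i l hle hi
      (by rw [hldef, hM]; ring)
    rw [h1, h2]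
    have hs : N + ((N-k) - i) = (N-k) + (N - i) := by omega
    rw [hs]
    ring
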